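/- If G is a finite simple graph and u is a vertex of G, then γ_gr^L(G) − 2 ≤ γ_gr^L(G − u) ≤ γ_gr^L(G), where G − u denotes the induced subgraph of G on the vertex set V(G) \ {u}. -/

import Mathlib

/-- A list of distinct vertices `s = (v_1, …, v_k)` is an *L-sequence* of `G` if for each `i`,
`N[v_i] \ ⋃_{j<i} N(v_j) ≠ ∅`, i.e. there is a vertex `w` in the closed neighborhood of `v_i`
that lies in no open neighborhood `N(v_j)` for `j < i`. -/
def IsLSeq {V : Type*} (G : SimpleGraph V) (s : List V) : Prop :=
  s.Nodup ∧ ∀ i : Fin s.length, ∃ w : V,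
    (w = s.get i ∨ G.Adj (s.get i) w) ∧
    ∀ j : Fin s.length, j < i → ¬ G.Adj (s.get j) w

/-- The L-Grundy domination number of `G`: the maximum length of an L-sequence of `G`. -/
noncomputable def LGrundy {V : Type*} [Fintype V] (G : SimpleGraph V) : ℕ :=
  sSup {k : ℕ | ∃ s : List V, IsLSeq G s ∧ s.length = k}

set_option linter.unusedSectionVars false

section Aux

variable {V : Type*} [DecidableEq V] (G : SimpleGraph V) (u : V)

lemma lseq_nil : IsLSeq G ([] : List V) :=
  ⟨List.nodup_nil, fun i => absurd i.2 (by simp)⟩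

lemma lseq_map (s' : List ↥{v : V | v ≠ u})
    (h : IsLSeq (G.induce {v : V | v ≠ u}) s') :
    IsLSeq G (s'.map Subtype.val) := by
  obtain ⟨hnd, hw⟩ := h
  refine ⟨hnd.map Subtype.val_injective, ?_⟩
  intro i
  have hlen : (s'.map Subtype.val).length = s'.length := by simp
  set i' : Fin s'.length := Fin.cast hlen i with hi'
  obtain ⟨w, hw1, hw2⟩ := hw i'
  have hget : ∀ j : Fin (s'.map Subtype.val).length,
      (s'.map Subtype.val).get j = (s'.get (Fin.cast hlen j)).1 := by
    intro j
    rw [List.get_eq_getElem, List.get_eq_getElem, List.getElem_map]; rfl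
  refine ⟨w.1, ?_, ?_⟩
  · rcases hw1 with h1 | h1
    · left; rw [hget i, h1]
    · right; rw [hget i]
      simpa [hi'] using h1
  · intro j hj
    rw [hget j]
    have := hw2 (Fin.cast hlen j) (by simpa [hi'] using hj)
    simpa using this

lemma lseq_key (s : List V) (hs : IsLSeq G s) :
    ∃ t : List V, s.length ≤ t.length + 2 ∧ (∀ v ∈ t, v ≠ u) ∧ t.Nodup ∧
      ∃ W : V → V, (∀ v ∈ t, W v ≠ u) ∧ (∀ v ∈ t, W v = v ∨ G.Adj v (W v)) ∧
        List.Pairwise (fun a b => ¬ G.Adj a (W b)) t := by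
  classical
  obtain ⟨hnd, hwit⟩ := hs
  -- choose, for each index, a witness avoiding u if possible
  have hW0 : ∀ i : Fin s.length, ∃ w : V,
      (w = s.get i ∨ G.Adj (s.get i) w) ∧
      (∀ j : Fin s.length, j < i → ¬ G.Adj (s.get j) w) ∧
      ((∃ w' : V, w' ≠ u ∧ (w' = s.get i ∨ G.Adj (s.get i) w') ∧
          ∀ j : Fin s.length, j < i → ¬ G.Adj (s.get j) w') → w ≠ u) := by
    intro i
    by_cases hg : ∃ w' : V, w' ≠ u ∧ (w' = s.get i ∨ G.Adj (s.get i) w') ∧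
        ∀ j : Fin s.length, j < i → ¬ G.Adj (s.get j) w'
    · obtain ⟨w, hw1, hw2, hw3⟩ := hg
      exact ⟨w, hw2, hw3, fun _ => hw1⟩
    · obtain ⟨w, hw1, hw2⟩ := hwit i
      exact ⟨w, hw1, hw2, fun h => absurd h hg⟩
  choose W0 hW0a hW0b hW0c using hW0
  set W : V → V := fun v =>
    if h : v ∈ s then W0 ⟨s.idxOf v, List.idxOf_lt_length_iff.2 h⟩ else v with hW
  have hWget : ∀ i : Fin s.length, W (s.get i) = W0 i := by
    intro i
    have hmem : s.get i ∈ s := s.get_mem i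
    rw [hW]
    simp only [dif_pos hmem]
    congr 1
    exact Fin.ext (by simpa using List.get_idxOf hnd i)
  set p : V → Bool := fun v => decide (v ≠ u ∧ W v ≠ u) with hp
  set t : List V := s.filter p with ht
  have hsub : List.Sublist t s := List.filter_sublist
  have htnd : t.Nodup := hsub.nodup hnd
  have hmemt : ∀ v ∈ t, v ≠ u ∧ W v ≠ u := by
    intro v hv
    have := List.of_mem_filter hv
    simpa [hp] using this
  have htsub : ∀ v ∈ t, v ∈ s := fun v hv => hsub.subset hv
  -- pairwise property on s
  have hpair : List.Pairwise (fun a b => ¬ G.Adj a (W b)) s := by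
    rw [List.pairwise_iff_get]
    intro i j hij
    rw [hWget j]
    exact hW0b j i hij
  -- pointwise closed-neighborhood property on s
  have hpt : ∀ v ∈ s, W v = v ∨ G.Adj v (W v) := by
    intro v hv
    obtain ⟨i, hi⟩ := List.mem_iff_get.mp hv
    subst hi
    rw [hWget i]
    exact hW0a i
  -- uniqueness of the "bad" vertex
  have huniq : ∀ v1 ∈ s, ∀ v2 ∈ s, v1 ≠ u → v2 ≠ u → W v1 = u → W v2 = u → v1 = v2 := by
    intro v1 h1 v2 h2 hu1 hu2 hWv1 hWv2
    by_contra hne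
    obtain ⟨i1, hi1⟩ := List.mem_iff_get.mp h1
    obtain ⟨i2, hi2⟩ := List.mem_iff_get.mp h2
    have key : ∀ i j : Fin s.length, i < j → s.get i ≠ u → W (s.get i) = u →
        W (s.get j) = u → False := by
      intro i j hij hiu hWi hWj
      have hnadj : ¬ G.Adj (s.get i) u := by
        have := hW0b j i hij
        rwa [← hWget j, hWj] at this
      have : u = s.get i ∨ G.Adj (s.get i) u := by
        have := hW0a i
        rwa [← hWget i, hWi] at this
      rcases this with h | h
      · exact hiu h.symm
      · exact hnadj h
    rcases lt_trichotomy i1 i2 with h | h | h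
    · exact key i1 i2 h (hi1 ▸ hu1) (hi1 ▸ hWv1) (hi2 ▸ hWv2)
    · exact hne (by rw [← hi1, ← hi2, h])
    · exact key i2 i1 h (hi2 ▸ hu2) (hi2 ▸ hWv2) (hi1 ▸ hWv1)
  -- length bound
  have hlen : s.length = t.length + (s.filter (fun v => ! p v)).length :=
    List.length_eq_length_filter_add p
  set r : List V := s.filter (fun v => ! p v) with hr
  have hrnd : r.Nodup := (List.filter_sublist (l := s)).nodup hnd
  have hrs : ∀ v ∈ r, v ∈ s := fun v hv => (List.filter_sublist (l := s)).subset hv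
  have hrmem : ∀ v ∈ r, v = u ∨ W v = u := by
    intro v hv
    have := List.of_mem_filter hv
    simp only [hp, Bool.not_eq_true', decide_eq_false_iff_not, not_and, not_not] at this
    by_cases h : v = u
    · exact Or.inl h
    · exact Or.inr (this h)
  have hb : ∃ b : V, ∀ v ∈ r, v = u ∨ v = b := by
    by_cases hB : ∃ b ∈ r, b ≠ u
    · obtain ⟨b, hbr, hbu⟩ := hB
      have hWb : W b = u := by
        rcases hrmem b hbr with h | h
        · exact absurd h hbu
        · exact h
      refine ⟨b, fun v hv => ?_⟩
      rcases eq_or_ne v u with h | h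
      · exact Or.inl h
      · refine Or.inr ?_
        have hWv : W v = u := by
          rcases hrmem v hv with h' | h'
          · exact absurd h' h
          · exact h'
        exact huniq v (hrs v hv) b (hrs b hbr) h hbu hWv hWb
    · exact ⟨u, fun v hv => Or.inl (by
        by_contra h
        exact hB ⟨v, hv, h⟩)⟩
  obtain ⟨b, hball⟩ := hb
  have hr2 : r.length ≤ 2 := by
    have hsubf : r.toFinset ⊆ {u, b} := by
      intro v hv
      rw [List.mem_toFinset] at hv
      rcases hball v hv with h | h <;> simp [h]
    calc r.length = r.toFinset.card := (List.toFinset_card_of_nodup hrnd).symm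
      _ ≤ ({u, b} : Finset V).card := Finset.card_le_card hsubf
      _ ≤ 2 := by
        refine le_trans (Finset.card_insert_le u {b}) ?_
        simp
  refine ⟨t, by omega, fun v hv => (hmemt v hv).1, htnd, W,
    fun v hv => (hmemt v hv).2, fun v hv => hpt v (htsub v hv), hpair.sublist hsub⟩

lemma lseq_lift (t : List V) (htu : ∀ v ∈ t, v ∈ {v : V | v ≠ u}) (hnd : t.Nodup)
    (W : V → V) (hWu : ∀ v ∈ t, W v ≠ u) (hWN : ∀ v ∈ t, W v = v ∨ G.Adj v (W v))
    (hP : List.Pairwise (fun a b => ¬ G.Adj a (W b)) t) :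
    ∃ t' : List ↥{v : V | v ≠ u},
      IsLSeq (G.induce {v : V | v ≠ u}) t' ∧ t'.length = t.length := by
  refine ⟨t.pmap (fun v h => (⟨v, h⟩ : ↥{v : V | v ≠ u})) htu, ⟨?_, ?_⟩, List.length_pmap⟩
  · exact hnd.pmap (fun a _ b _ h => congrArg Subtype.val h)
  · intro i
    have hlen : (t.pmap (fun v h => (⟨v, h⟩ : ↥{v : V | v ≠ u})) htu).length = t.length :=
      List.length_pmap
    have hi : (i : ℕ) < t.length := by rw [← hlen]; exact i.2
    have hget : ∀ (j : Fin (t.pmap (fun v h => (⟨v, h⟩ : ↥{v : V | v ≠ u})) htu).length)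
        (hj : (j : ℕ) < t.length),
        (t.pmap (fun v h => (⟨v, h⟩ : ↥{v : V | v ≠ u})) htu).get j
          = ⟨t[(j : ℕ)], htu _ (List.getElem_mem hj)⟩ := by
      intro j hj
      rw [List.get_eq_getElem, List.getElem_pmap]
    have hmem : t[(i : ℕ)] ∈ t := List.getElem_mem hi
    refine ⟨⟨W t[(i : ℕ)], hWu _ hmem⟩, ?_, ?_⟩
    · rcases hWN _ hmem with h | h
      · left; rw [hget i hi]; exact Subtype.ext h
      · right; rw [hget i hi]
        simpa using h
    · intro j hj
      have hjlen : (j : ℕ) < t.length := by rw [← hlen]; exact j.2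
      rw [hget j hjlen]
      have := List.pairwise_iff_get.mp hP ⟨(j : ℕ), hjlen⟩ ⟨(i : ℕ), hi⟩ hj
      simpa using this

end Aux

/-- If `u` is a vertex of `G`, then
`γ_gr^L(G) − 2 ≤ γ_gr^L(G − u) ≤ γ_gr^L(G)`, where `G − u` is the induced subgraph on
`V(G) \ {u}`. -/
theorem lgrundy_deleteVertex {V : Type*} [Fintype V] [DecidableEq V]
    (G : SimpleGraph V) (u : V) :
    LGrundy G - 2 ≤ LGrundy (G.induce {v : V | v ≠ u}) ∧
      LGrundy (G.induce {v : V | v ≠ u}) ≤ LGrundy G := by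
  classical
  have hbddG : BddAbove {k : ℕ | ∃ s : List V, IsLSeq G s ∧ s.length = k} := by
    refine ⟨Fintype.card V, fun k hk => ?_⟩
    obtain ⟨s, hs, rfl⟩ := hk
    exact hs.1.length_le_card
  have hbddG' : BddAbove {k : ℕ | ∃ s : List ↥{v : V | v ≠ u},
      IsLSeq (G.induce {v : V | v ≠ u}) s ∧ s.length = k} := by
    refine ⟨Fintype.card ↥{v : V | v ≠ u}, fun k hk => ?_⟩
    obtain ⟨s, hs, rfl⟩ := hk
    exact hs.1.length_le_card
  have hne : (0 : ℕ) ∈ {k : ℕ | ∃ s : List V, IsLSeq G s ∧ s.length = k} :=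
    ⟨[], lseq_nil G, rfl⟩
  have hne' : (0 : ℕ) ∈ {k : ℕ | ∃ s : List ↥{v : V | v ≠ u},
      IsLSeq (G.induce {v : V | v ≠ u}) s ∧ s.length = k} :=
    ⟨[], lseq_nil _, rfl⟩
  constructor
  · -- lower bound
    rw [tsub_le_iff_right]
    apply csSup_le ⟨0, hne⟩
    rintro k ⟨s, hs, rfl⟩
    obtain ⟨t, hlen, htu, htnd, W, h1, h2, h3⟩ := lseq_key G u s hs
    obtain ⟨t', ht', hlen'⟩ := lseq_lift G u t htu htnd W h1 h2 h3
    have hle : t'.length ≤ LGrundy (G.induce {v : V | v ≠ u}) :=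
      le_csSup hbddG' ⟨t', ht', rfl⟩
    unfold LGrundy at hle ⊢
    omega
  · -- upper bound
    apply csSup_le ⟨0, hne'⟩
    rintro k ⟨s', hs', rfl⟩
    have hmap := lseq_map G u s' hs'
    have : (s'.map Subtype.val).length ≤ LGrundy G :=
      le_csSup hbddG ⟨s'.map Subtype.val, hmap, rfl⟩
    simpa using this
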